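/- There exists a finite partially ordered set (V, ≤) with exactly 27 elements such that β_3 = 27 (three disjoint chains cover all of V), and there is a greedy chain sequence C_1, C_2, C_3 with |C_1| = 9, |C_2| = 6 and |C_3| = 4, so that the three greedy chains cover exactly 19 < (3/4)·β_3 elements. -/
import Mathlib


/-- A greedy chain sequence: pairwise disjoint chains `C 0, …, C (m-1)` such that each
`C i` has maximum cardinality among all chains contained in the complement of the
previously chosen chains. -/
def GreedyChainSeq (V : Type) [DecidableEq V] [PartialOrder V]
    {m : ℕ} (C : Fin m → Finset V) : Prop :=
  (∀ i, IsChain (· ≤ ·) ((C i : Finset V) : Set V)) ∧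
  (∀ i j, i ≠ j → Disjoint (C i) (C j)) ∧
  (∀ (i : Fin m) (D : Finset V), IsChain (· ≤ ·) ((D : Finset V) : Set V) →
    (∀ v ∈ D, ∀ j, j < i → v ∉ C j) → D.card ≤ (C i).card)

/-- `β_k`: the maximum cardinality of the union of `k` pairwise disjoint chains. -/
noncomputable def betaVal (V : Type) [Fintype V] [DecidableEq V] [PartialOrder V]
    (k : ℕ) : ℕ :=
  sSup {n : ℕ | ∃ C : Fin k → Finset V,
    (∀ i, IsChain (· ≤ ·) ((C i : Finset V) : Set V)) ∧
    (∀ i j, i ≠ j → Disjoint (C i) (C j)) ∧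
    n = (Finset.univ.biUnion C).card}

def GreedyChainsExample3 (V : Type) [Fintype V] [DecidableEq V] [PartialOrder V] : Prop :=
  Fintype.card V = 27 ∧ betaVal V 3 = 27 ∧
  ∃ C : Fin 3 → Finset V, GreedyChainSeq V C ∧
    (C 0).card = 9 ∧ (C 1).card = 6 ∧ (C 2).card = 4 ∧
    (Finset.univ.biUnion C).card = 19 ∧
    4 * (Finset.univ.biUnion C).card < 3 * betaVal V 3

/- ### The construction -/

structure V27 where
  t : Fin 3
  i : Fin 9
deriving DecidableEq, Fintype

def levv (x y : V27) : Prop :=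
  (x.t = y.t ∧ x.i ≤ y.i) ∨
  (x.t = 0 ∧ y.t = 1 ∧ ((x.i ≤ 2 ∧ 3 ≤ y.i) ∨ (x.i ≤ 6 ∧ 7 ≤ y.i))) ∨
  (x.t = 1 ∧ y.t = 2 ∧ x.i ≤ 5 ∧ 6 ≤ y.i) ∨
  (x.t = 0 ∧ y.t = 2 ∧ x.i ≤ 2 ∧ 6 ≤ y.i) ∨
  (x.t = 2 ∧ y.t = 0 ∧ x.i ≤ 1 ∧ 5 ≤ y.i) ∨
  (x.t = 2 ∧ y.t = 1 ∧ x.i ≤ 1 ∧ 7 ≤ y.i)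

instance levv.decidable : ∀ x y : V27, Decidable (levv x y) := fun x y => by
  unfold levv; infer_instance

lemma levv_refl : ∀ a : V27, levv a a := by decide
lemma levv_trans : ∀ a b c : V27, levv a b → levv b c → levv a c := by decide
lemma levv_antisymm : ∀ a b : V27, levv a b → levv b a → a = b := by decide

instance : PartialOrder V27 where
  le := levv
  le_refl := levv_refl
  le_trans := levv_trans
  le_antisymm := levv_antisymm

instance : DecidableRel (α := V27) (· ≤ ·) := fun x y => levv.decidable x y

/-- The greedy chains. -/
def Cg : Fin 3 → Finset V27 :=
  ![{⟨0,0⟩, ⟨0,1⟩, ⟨0,2⟩, ⟨1,3⟩, ⟨1,4⟩, ⟨1,5⟩, ⟨2,6⟩, ⟨2,7⟩, ⟨2,8⟩},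
    {⟨2,0⟩, ⟨2,1⟩, ⟨0,5⟩, ⟨0,6⟩, ⟨1,7⟩, ⟨1,8⟩},
    {⟨2,2⟩, ⟨2,3⟩, ⟨2,4⟩, ⟨2,5⟩}]

/-- The covering chains. -/
def Cov : Fin 3 → Finset V27 := fun t => Finset.univ.filter (fun v => v.t = t)

/-- Rank functions. -/
def g0 (v : V27) : ℕ := v.i.val

def g1 (v : V27) : ℕ :=
  if v.t = 0 then v.i.val - 3
  else if v.t = 1 then (if v.i.val ≤ 2 then v.i.val else v.i.val - 3)
  else v.i.val

def g2 (v : V27) : ℕ :=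
  if v.t = 0 then (if v.i.val ≤ 4 then v.i.val - 3 else v.i.val - 5)
  else if v.t = 1 then (if v.i.val ≤ 2 then v.i.val else 3)
  else v.i.val - 2

/- ### Generic helper lemmas -/

lemma isChain_of_pairwise {V : Type} [PartialOrder V] (F : Finset V)
    (h : ∀ x ∈ F, ∀ y ∈ F, x ≤ y ∨ y ≤ x) : IsChain (· ≤ ·) (F : Set V) :=
  fun x hx y hy _ => h x (Finset.mem_coe.mp hx) y (Finset.mem_coe.mp hy)

lemma chain_card_le {V : Type} [DecidableEq V] [PartialOrder V] (D : Finset V)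
    (hD : IsChain (· ≤ ·) (D : Set V)) (f : V → ℕ) (n : ℕ)
    (hlt : ∀ v ∈ D, f v < n)
    (hmono : ∀ x ∈ D, ∀ y ∈ D, x ≤ y → x ≠ y → f x < f y) :
    D.card ≤ n := by
  have := Finset.card_le_card_of_injOn f
    (fun v hv => Finset.mem_range.mpr (hlt v hv))
    (s := D) (t := Finset.range n) ?_
  · simpa using this
  · intro x hx y hy hxy
    by_contra hne
    have hx' := Finset.mem_coe.mp hx
    have hy' := Finset.mem_coe.mp hy
    rcases hD hx hy hne with h | h
    · exact absurd hxy (Nat.ne_of_lt (hmono x hx' y hy' h hne))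
    · exact absurd hxy.symm (Nat.ne_of_lt (hmono y hy' x hx' h (Ne.symm hne)))

/- ### Decidable facts about the construction -/

lemma mono0 : ∀ x y : V27, x ≤ y → x ≠ y → g0 x < g0 y := by decide

lemma mono1 : ∀ x y : V27, x ∉ Cg 0 → y ∉ Cg 0 → x ≤ y → x ≠ y → g1 x < g1 y := by decide

lemma bound1 : ∀ v : V27, v ∉ Cg 0 → g1 v < 6 := by decide

lemma mono2 : ∀ x y : V27, x ∉ Cg 0 → x ∉ Cg 1 → y ∉ Cg 0 → y ∉ Cg 1 →
    x ≤ y → x ≠ y → g2 x < g2 y := by decide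

lemma bound2 : ∀ v : V27, v ∉ Cg 0 → v ∉ Cg 1 → g2 v < 4 := by decide

lemma chainCg : ∀ k : Fin 3, ∀ x ∈ Cg k, ∀ y ∈ Cg k, x ≤ y ∨ y ≤ x := by decide

lemma disjCg : ∀ i j : Fin 3, i ≠ j → ∀ a : V27, a ∈ Cg i → a ∉ Cg j := by decide

lemma chainCov : ∀ k : Fin 3, ∀ x ∈ Cov k, ∀ y ∈ Cov k, x ≤ y ∨ y ≤ x := by decide

lemma disjCov : ∀ i j : Fin 3, i ≠ j → ∀ a : V27, a ∈ Cov i → a ∉ Cov j := by decide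

lemma cardV27 : Fintype.card V27 = 27 := by decide

lemma cardCovUnion : (Finset.univ.biUnion Cov).card = 27 := by decide

lemma cardCgUnion : (Finset.univ.biUnion Cg).card = 19 := by decide

lemma cardCg0 : (Cg 0).card = 9 := by decide
lemma cardCg1 : (Cg 1).card = 6 := by decide
lemma cardCg2 : (Cg 2).card = 4 := by decide

/- ### beta value -/

lemma beta27 : betaVal V27 3 = 27 := by
  unfold betaVal
  have hmem : 27 ∈ {n : ℕ | ∃ C : Fin 3 → Finset V27,
      (∀ i, IsChain (· ≤ ·) ((C i : Finset V27) : Set V27)) ∧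
      (∀ i j, i ≠ j → Disjoint (C i) (C j)) ∧
      n = (Finset.univ.biUnion C).card} := by
    refine ⟨Cov, fun i => isChain_of_pairwise _ (chainCov i), ?_, cardCovUnion.symm⟩
    intro i j hij
    exact Finset.disjoint_left.mpr (fun {a} ha => disjCov i j hij a ha)
  have hub : ∀ n ∈ {n : ℕ | ∃ C : Fin 3 → Finset V27,
      (∀ i, IsChain (· ≤ ·) ((C i : Finset V27) : Set V27)) ∧
      (∀ i j, i ≠ j → Disjoint (C i) (C j)) ∧
      n = (Finset.univ.biUnion C).card}, n ≤ 27 := by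
    rintro n ⟨C, -, -, rfl⟩
    calc (Finset.univ.biUnion C).card ≤ Fintype.card V27 := Finset.card_le_univ _
      _ = 27 := cardV27
  exact le_antisymm (csSup_le ⟨27, hmem⟩ hub) (le_csSup ⟨27, hub⟩ hmem)

/- ### Main theorem -/

/-- There is a 27-element finite poset with `β_3 = 27` admitting a greedy chain sequence
`C_1, C_2, C_3` with `|C_1| = 9`, `|C_2| = 6`, `|C_3| = 4`, thus covering exactly
`19 < (3/4)·β_3` elements. -/
theorem greedy_chains_example_k3 :
    ∃ (V : Type) (f : Fintype V) (d : DecidableEq V) (p : PartialOrder V),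
      @GreedyChainsExample3 V f d p := by
  refine ⟨V27, inferInstance, inferInstance, inferInstance, cardV27, beta27, Cg, ?_,
    cardCg0, cardCg1, cardCg2, cardCgUnion, ?_⟩
  · refine ⟨fun i => isChain_of_pairwise _ (chainCg i),
      fun i j hij => Finset.disjoint_left.mpr (fun {a} ha => disjCg i j hij a ha), ?_⟩
    intro i D hD havoid
    fin_cases i
    · -- max chain has 9 elements
      show D.card ≤ (Cg 0).card
      rw [cardCg0]
      exact chain_card_le D hD g0 9 (fun v _ => v.i.isLt)
        (fun x _ y _ hle hne => mono0 x y hle hne)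
    · show D.card ≤ (Cg 1).card
      rw [cardCg1]
      refine chain_card_le D hD g1 6 ?_ ?_
      · intro v hv
        exact bound1 v (havoid v hv 0 (by decide))
      · intro x hx y hy hle hne
        exact mono1 x y (havoid x hx 0 (by decide)) (havoid y hy 0 (by decide)) hle hne
    · show D.card ≤ (Cg 2).card
      rw [cardCg2]
      refine chain_card_le D hD g2 4 ?_ ?_
      · intro v hv
        exact bound2 v (havoid v hv 0 (by decide)) (havoid v hv 1 (by decide))
      · intro x hx y hy hle hne
        exact mono2 x y (havoid x hx 0 (by decide)) (havoid x hx 1 (by decide))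
          (havoid y hy 0 (by decide)) (havoid y hy 1 (by decide)) hle hne
  · rw [cardCgUnion, beta27]; norm_num
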